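/- Let D be a minimal strong digraph (MSD), C_q a directed cycle of length q contained in D, and D' the digraph obtained from D by deleting all arcs of C_q. Let S be a strong component of D' and let u, v be two distinct vertices of S such that D contains an arc from u to some vertex a not in S and an arc from some vertex b not in S to v. Then D contains a directed path from u to v that uses no arc of S. -/
import Mathlib


/-- A digraph (given by its arc relation `A`) is strongly connected if every vertex
can reach every vertex by a directed path. -/
def StronglyConnected {V : Type*} (A : V → V → Prop) : Prop :=
  ∀ u v : V, Relation.ReflTransGen A u v

/-- A minimal strong digraph: strongly connected, and deleting any arc destroys
strong connectivity. -/
def IsMSD {V : Type*} (A : V → V → Prop) : Prop :=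
  StronglyConnected A ∧
    ∀ a b : V, A a b →
      ¬ StronglyConnected (fun x y => A x y ∧ ¬(x = a ∧ y = b))

/-- `c : ZMod q → V` describes a directed cycle of length `q` contained in the digraph `A`. -/
def IsCycleIn {V : Type*} (A : V → V → Prop) (q : ℕ) (c : ZMod q → V) : Prop :=
  2 ≤ q ∧ Function.Injective c ∧ ∀ i : ZMod q, A (c i) (c (i + 1))

/-- The digraph `D'` obtained from `A` by deleting all arcs of the cycle `c`. -/
def DelCycle {V : Type*} (A : V → V → Prop) (q : ℕ) (c : ZMod q → V) : V → V → Prop :=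
  fun x y => A x y ∧ ¬ ∃ i : ZMod q, x = c i ∧ y = c (i + 1)

/-- Mutual reachability of two vertices. -/
def MutReach {V : Type*} (A : V → V → Prop) (u v : V) : Prop :=
  Relation.ReflTransGen A u v ∧ Relation.ReflTransGen A v u

/-- `S` is (the vertex set of) a strong component of the digraph `A`. -/
def IsSC {V : Type*} (A : V → V → Prop) (S : Set V) : Prop :=
  ∃ v : V, S = {u | MutReach A v u}

/-- Indegree of `v`. -/
noncomputable def indeg {V : Type*} (A : V → V → Prop) (v : V) : ℕ := {u | A u v}.ncard

/-- Outdegree of `v`. -/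
noncomputable def outdeg {V : Type*} (A : V → V → Prop) (v : V) : ℕ := {u | A v u}.ncard

/-- A vertex is linear if its indegree and outdegree both equal 1. -/
def IsLinear {V : Type*} (A : V → V → Prop) (v : V) : Prop :=
  indeg A v = 1 ∧ outdeg A v = 1

/-- A vertex `v` is a cut point if deleting `v` (and its incident arcs) leaves a
digraph whose underlying graph is disconnected. -/
def IsCutPoint {V : Type*} (A : V → V → Prop) (v : V) : Prop :=
  ∃ x y : V, x ≠ v ∧ y ≠ v ∧
    ¬ Relation.ReflTransGen (fun a b => a ≠ v ∧ b ≠ v ∧ (A a b ∨ A b a)) x y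

/-- Adjacency in the condensation (Hasse diagram) of the digraph `A`:
two distinct strong components with an arc from the first to the second. -/
def HAdj {V : Type*} (A : V → V → Prop) (S T : Set V) : Prop :=
  IsSC A S ∧ IsSC A T ∧ S ≠ T ∧ ∃ u ∈ S, ∃ v ∈ T, A u v

noncomputable def HIndeg {V : Type*} (A : V → V → Prop) (S : Set V) : ℕ := {T : Set V | HAdj A T S}.ncard
noncomputable def HOutdeg {V : Type*} (A : V → V → Prop) (S : Set V) : ℕ := {T : Set V | HAdj A S T}.ncard

/-- A vertex of the Hasse diagram is linear if its indegree and outdegree there equal 1. -/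
def HLinear {V : Type*} (A : V → V → Prop) (S : Set V) : Prop :=
  HIndeg A S = 1 ∧ HOutdeg A S = 1

/-- Four elements of `ZMod q` appear in this cyclic order (all distinct). -/
def CyclicOrder4 {q : ℕ} (a b c d : ZMod q) : Prop :=
  0 < (b - a).val ∧ (b - a).val < (c - a).val ∧ (c - a).val < (d - a).val

/-- If `u ≠ v` lie in a strong component `S` of `D'`, `D` has an arc from `u`
leaving `S` and an arc into `v` entering `S`, then `D` has a `u`-`v` path using no arc of `S`. -/
theorem stmt4 {V : Type*} [Fintype V] (A : V → V → Prop) (q : ℕ) (c : ZMod q → V)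
    (hMSD : IsMSD A) (hc : IsCycleIn A q c) (S : Set V) (hS : IsSC (DelCycle A q c) S)
    (u v a b : V) (hu : u ∈ S) (hv : v ∈ S) (huv : u ≠ v)
    (ha : A u a) (haS : a ∉ S) (hb : A b v) (hbS : b ∉ S) :
    Relation.ReflTransGen
      (fun x y => A x y ∧ ¬(x ∈ S ∧ y ∈ S ∧ DelCycle A q c x y)) u v := by
  classical
  obtain ⟨hq, _hcinj, hcarc⟩ := hc
  obtain ⟨hstrong, _hmin⟩ := hMSD
  obtain ⟨v₀, hSeq⟩ := hS
  haveI : NeZero q := ⟨by omega⟩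
  set G : V → V → Prop :=
    fun x y => A x y ∧ ¬(x ∈ S ∧ y ∈ S ∧ DelCycle A q c x y) with hGdef
  have hmem : ∀ w, w ∈ S ↔ MutReach (DelCycle A q c) v₀ w := by
    intro w; rw [hSeq]; exact Iff.rfl
  -- cycle arcs are always allowed
  have hCallowed : ∀ j : ZMod q, G (c j) (c (j + 1)) := by
    intro j
    refine ⟨hcarc j, ?_⟩
    rintro ⟨-, -, hd⟩
    exact hd.2 ⟨j, rfl, rfl⟩
  -- riding the cycle: if u reaches one cycle vertex, it reaches all
  have ride : ∀ m : ZMod q, Relation.ReflTransGen G u (c m) →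
      ∀ i : ZMod q, Relation.ReflTransGen G u (c i) := by
    intro m hm i
    have key : ∀ k : ℕ, Relation.ReflTransGen G u (c (m + (k : ZMod q))) := by
      intro k
      induction k with
      | zero => simpa using hm
      | succ n ih =>
        have h3 : ((n + 1 : ℕ) : ZMod q) = (n : ZMod q) + 1 := by push_cast; ring
        rw [h3, ← add_assoc]
        exact ih.tail (hCallowed (m + (n : ZMod q)))
    have h4 : ((i - m).val : ZMod q) = i - m := ZMod.natCast_rightInverse (i - m)
    have h5 : m + (((i - m).val : ℕ) : ZMod q) = i := by rw [h4]; ring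
    have := key (i - m).val
    rwa [h5] at this
  -- from u one can reach some cycle vertex
  have claimb : ∃ m : ZMod q, Relation.ReflTransGen G u (c m) := by
    by_cases hucyc : ∃ j : ZMod q, u = c j
    · obtain ⟨j, hj⟩ := hucyc
      exact ⟨j, hj ▸ Relation.ReflTransGen.refl⟩
    · have hD'ua : DelCycle A q c u a := by
        refine ⟨ha, ?_⟩
        rintro ⟨i, h1, -⟩
        exact hucyc ⟨i, h1⟩
      have main : ∀ w, Relation.ReflTransGen A a w →
          ((w ∉ S ∧ Relation.ReflTransGen G u w ∧
            Relation.ReflTransGen (DelCycle A q c) a w) ∨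
            ∃ m : ZMod q, Relation.ReflTransGen G u (c m)) := by
        intro w hw
        induction hw with
        | refl =>
          refine Or.inl ⟨haS, Relation.ReflTransGen.single ⟨ha, ?_⟩,
            Relation.ReflTransGen.refl⟩
          rintro ⟨-, h2, -⟩; exact haS h2
        | @tail p x h1 h2 ih =>
          rcases ih with ⟨hpS, hRp, hD'ap⟩ | hdone
          · by_cases harccyc : ∃ i : ZMod q, p = c i ∧ x = c (i + 1)
            · obtain ⟨i, hpi, -⟩ := harccyc
              exact Or.inr ⟨i, hpi ▸ hRp⟩
            · have hD'px : DelCycle A q c p x := ⟨h2, harccyc⟩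
              by_cases hxS : x ∈ S
              · exfalso
                apply haS
                refine (hmem a).2 ⟨((((hmem u).1 hu).1).tail hD'ua), ?_⟩
                exact (hD'ap.tail hD'px).trans ((hmem x).1 hxS).2
              · exact Or.inl ⟨hxS, hRp.tail ⟨h2, fun hh => hpS hh.1⟩,
                  hD'ap.tail hD'px⟩
          · exact Or.inr hdone
      rcases main v (hstrong a v) with ⟨hvS, -, -⟩ | hdone
      · exact absurd hv hvS
      · exact hdone
  -- some cycle vertex reaches v
  have claimc : ∃ m : ZMod q, Relation.ReflTransGen G (c m) v := by
    by_cases hvcyc : ∃ k : ZMod q, v = c k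
    · obtain ⟨k, hk⟩ := hvcyc
      exact ⟨k, hk ▸ Relation.ReflTransGen.refl⟩
    · have hD'bv : DelCycle A q c b v := by
        refine ⟨hb, ?_⟩
        rintro ⟨i, -, h2⟩
        exact hvcyc ⟨i + 1, h2⟩
      have main : ∀ w, Relation.ReflTransGen A w b →
          ((w ∉ S ∧ Relation.ReflTransGen G w v ∧
            Relation.ReflTransGen (DelCycle A q c) w b) ∨
            ∃ m : ZMod q, Relation.ReflTransGen G (c m) v) := by
        intro w hw
        induction hw using Relation.ReflTransGen.head_induction_on with
        | refl =>
          refine Or.inl ⟨hbS, Relation.ReflTransGen.single ⟨hb, ?_⟩,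
            Relation.ReflTransGen.refl⟩
          rintro ⟨h1, -, -⟩; exact hbS h1
        | @head p y h2 h1 ih =>
          rcases ih with ⟨hyS, hTy, hD'yb⟩ | hdone
          · by_cases harccyc : ∃ i : ZMod q, p = c i ∧ y = c (i + 1)
            · obtain ⟨i, -, hyi⟩ := harccyc
              exact Or.inr ⟨i + 1, hyi ▸ hTy⟩
            · have hD'py : DelCycle A q c p y := ⟨h2, harccyc⟩
              by_cases hpS : p ∈ S
              · exfalso
                apply hbS
                refine (hmem b).2 ⟨((((hmem p).1 hpS).1).tail hD'py).trans hD'yb, ?_⟩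
                exact (Relation.ReflTransGen.single hD'bv).trans ((hmem v).1 hv).2
              · refine Or.inl ⟨hpS, Relation.ReflTransGen.head ⟨h2, ?_⟩ hTy,
                  Relation.ReflTransGen.head hD'py hD'yb⟩
                rintro ⟨-, h4, -⟩; exact hyS h4
          · exact Or.inr hdone
      rcases main u (hstrong u b) with ⟨huS, -, -⟩ | hdone
      · exact absurd hu huS
      · exact hdone
  obtain ⟨m, hm⟩ := claimb
  obtain ⟨k, hk⟩ := claimc
  exact (ride m hm k).trans hk
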